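/- Let X ⊆ ℕ, let ⟨T_i : i ∈ X⟩ be trees (each a prefix-closed subset of List ℕ containing the empty list), and let S be the tree formed by combining them at a root r, i.e., S = {r} ∪ { r ++ [c(i,j)] ++ σ : i ∈ X, j ∈ {0,1}, σ ∈ T_i }, where c is a fixed injection of ℕ × {0,1} into ℕ (e.g., c(i,j) = 2i + j), and write r_{i,j} = r ++ [c(i,j)]. Let (C, M) be a König cover of S (viewed as a graph). Then there exists a function assigning to each i ∈ X an element r_i ∈ { r_{i,0}, r_{i,1} } such that: every r_i belongs to S^*, and r ∉ C if and only if r_i ∈ C for every i ∈ X. -/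

import Mathlib

/-- `(C, M)` is a König cover of the simple graph `G`. -/
def IsKonigCover {V : Type*} (G : SimpleGraph V) (C : Set V) (M : Set (Sym2 V)) : Prop :=
  M ⊆ G.edgeSet ∧
  (M.Pairwise fun e f => ∀ v, v ∈ e → v ∉ f) ∧
  (∀ e ∈ G.edgeSet, ∃ v ∈ e, v ∈ C) ∧
  (∀ e ∈ M, ∃! v, v ∈ e ∧ v ∈ C) ∧
  (∀ v ∈ C, ∃ e ∈ M, v ∈ e)

/-- A tree `T ⊆ List ℕ` viewed as a graph: edges join each `σ ∈ T` to its one-step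
extensions in `T`. -/
def treeGraph (T : Set (List ℕ)) : SimpleGraph (List ℕ) where
  Adj s t := s ∈ T ∧ t ∈ T ∧ ((∃ n, t = s ++ [n]) ∨ ∃ n, s = t ++ [n])
  symm := by
    constructor
    rintro s t ⟨hs, ht, h | h⟩
    · exact ⟨ht, hs, Or.inr h⟩
    · exact ⟨ht, hs, Or.inl h⟩
  loopless := by
    constructor
    rintro s ⟨-, -, ⟨n, h⟩ | ⟨n, h⟩⟩ <;>
      simpa using congrArg List.length h

/-- `T` is a rooted tree with root `r`: `T = { r ++ σ : σ ∈ T₀ }` for some prefix-closed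
`T₀` containing the empty list. -/
def IsRootedTree (r : List ℕ) (T : Set (List ℕ)) : Prop :=
  ∃ T₀ : Set (List ℕ), [] ∈ T₀ ∧ (∀ ⦃σ τ : List ℕ⦄, σ <+: τ → τ ∈ T₀ → σ ∈ T₀) ∧
    T = (fun σ => r ++ σ) '' T₀

/-- `T^*` for a rooted tree `T` with root `r` and a König cover `(C, M)`:
those `t ∈ T` such that every `s` with `r ≺ s ⪯ t` satisfies `s ∉ C` or
`{s.dropLast, s} ∉ M`. -/
def Tstar (r : List ℕ) (T : Set (List ℕ)) (C : Set (List ℕ))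
    (M : Set (Sym2 (List ℕ))) : Set (List ℕ) :=
  {t ∈ T | ∀ s : List ℕ, r <+: s → r ≠ s → s <+: t →
    s ∉ C ∨ s(s.dropLast, s) ∉ M}


/-- The tree obtained by combining the trees `⟨T i : i ∈ X⟩` at a root `r`: two copies
of each `T i` are adjoined to `r`, using the injection `c(i, j) = 2 * i + j` of
`ℕ × {0, 1}` into `ℕ`. -/
def combineAt (r : List ℕ) (X : Set ℕ) (T : ℕ → Set (List ℕ)) : Set (List ℕ) :=
  {r} ∪ {l | ∃ i ∈ X, ∃ j : Fin 2, ∃ σ ∈ T i, l = r ++ [2 * i + j] ++ σ}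

/-- If `(C, M)` is a König cover of the combination `S` of trees `⟨T i : i ∈ X⟩` at the
root `r`, then one can choose for each `i ∈ X` one of the two roots
`r_{i,0} = r ++ [2i]`, `r_{i,1} = r ++ [2i+1]` — call it `g i` — so that each `g i` lies
in `S^*`, and `r ∉ C` iff `g i ∈ C` for every `i ∈ X`. -/
theorem statement11 (r : List ℕ) (X : Set ℕ) (T : ℕ → Set (List ℕ))
    (hT : ∀ i ∈ X, [] ∈ T i ∧ ∀ ⦃σ τ : List ℕ⦄, σ <+: τ → τ ∈ T i → σ ∈ T i)
    (C : Set (List ℕ)) (M : Set (Sym2 (List ℕ)))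
    (h : IsKonigCover (treeGraph (combineAt r X T)) C M) :
    ∃ g : ℕ → List ℕ,
      (∀ i ∈ X, (g i = r ++ [2 * i] ∨ g i = r ++ [2 * i + 1]) ∧
        g i ∈ Tstar r (combineAt r X T) C M) ∧
      (r ∉ C ↔ ∀ i ∈ X, g i ∈ C) := by
  classical
  obtain ⟨hM_edge, hM_match, hC_cover, hMC, hCM⟩ := h
  set S := combineAt r X T with hS
  -- membership of the little roots
  have hmemS : ∀ i ∈ X, ∀ m : ℕ, m = 2 * i ∨ m = 2 * i + 1 → r ++ [m] ∈ S := by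
    rintro i hi m (rfl | rfl)
    · exact Or.inr ⟨i, hi, 0, [], (hT i hi).1, by simp⟩
    · exact Or.inr ⟨i, hi, 1, [], (hT i hi).1, by simp⟩
  have hrS : r ∈ S := Or.inl rfl
  have hadj : ∀ i ∈ X, ∀ m : ℕ, m = 2 * i ∨ m = 2 * i + 1 →
      (treeGraph S).Adj r (r ++ [m]) := fun i hi m hm =>
    ⟨hrS, hmemS i hi m hm, Or.inl ⟨m, rfl⟩⟩
  have hne : ∀ m : ℕ, r ≠ r ++ [m] := by
    intro m hm; simpa using congrArg List.length hm
  -- Tstar criterion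
  have hTstar : ∀ m : ℕ, r ++ [m] ∈ S → (r ++ [m] ∉ C ∨ s(r, r ++ [m]) ∉ M) →
      r ++ [m] ∈ Tstar r S C M := by
    intro m hmS hdisj
    refine ⟨hmS, fun s hrs hrne hst => ?_⟩
    have hs : s = r ++ [m] := by
      have h1 : r.length ≤ s.length := hrs.length_le
      have h2 : s.length ≤ r.length + 1 := by simpa using hst.length_le
      have h3 : r.length ≠ s.length := by
        intro hl; exact hrne (hrs.eq_of_length hl)
      exact hst.eq_of_length (by simpa using by omega)
    subst hs
    have hdl : (r ++ [m]).dropLast = r := by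
      simpa using List.dropLast_concat (l := r) (a := m)
    rw [hdl]
    exact hdisj
  -- matching uniqueness at r
  have hUniq : ∀ e ∈ M, ∀ f ∈ M, r ∈ e → r ∈ f → e = f := by
    intro e he f hf hre hrf
    by_contra hef
    exact hM_match he hf hef r hre hrf
  -- if the edge to r++[m] is in M and r ∈ C, then r++[m] ∉ C
  have hnotC : ∀ m : ℕ, r ∈ C → s(r, r ++ [m]) ∈ M → r ++ [m] ∉ C := by
    intro m hrC hmM hmC
    obtain ⟨v, hv, hv_uniq⟩ := hMC _ hmM
    have h1 : r = v := hv_uniq r ⟨Sym2.mem_mk_left _ _, hrC⟩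
    have h2 : r ++ [m] = v := hv_uniq _ ⟨Sym2.mem_mk_right _ _, hmC⟩
    exact hne m (h1.trans h2.symm)
  by_cases hrC : r ∈ C
  · -- r ∈ C : find the unique M-edge at r
    obtain ⟨e, heM, hre⟩ := hCM r hrC
    obtain ⟨t, rfl⟩ := Sym2.mem_iff_exists.mp hre
    have hadjrt : (treeGraph S).Adj r t := hM_edge heM
    obtain ⟨-, htS, hn | hn⟩ := hadjrt
    · obtain ⟨n, rfl⟩ := hn
      -- identify n = 2 i₀ + j₀
      have htS' : ∃ i ∈ X, ∃ j : Fin 2, n = 2 * i + (j : ℕ) := by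
        rcases htS with hl | ⟨i, hi, j, σ, hσ, hl⟩
        · exact absurd hl.symm (hne n)
        · refine ⟨i, hi, j, ?_⟩
          rw [List.append_assoc] at hl
          have := List.append_cancel_left hl
          simpa using (List.cons_eq_cons.mp (by simpa using this)).1
      obtain ⟨i₀, hi₀, j₀, hn0⟩ := htS'
      obtain ⟨g, hgdef⟩ : ∃ g : ℕ → List ℕ, ∀ i,
          g i = if s(r, r ++ [2 * i]) ∈ M then r ++ [2 * i]
            else if s(r, r ++ [2 * i + 1]) ∈ M then r ++ [2 * i + 1] else r ++ [2 * i] :=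
        ⟨_, fun _ => rfl⟩
      refine ⟨g, ?_, ?_⟩
      · intro i hi
        by_cases h0 : s(r, r ++ [2 * i]) ∈ M
        · rw [hgdef i, if_pos h0]
          exact ⟨Or.inl rfl, hTstar _ (hmemS i hi _ (Or.inl rfl))
            (Or.inl (hnotC _ hrC h0))⟩
        · by_cases h1 : s(r, r ++ [2 * i + 1]) ∈ M
          · rw [hgdef i, if_neg h0, if_pos h1]
            exact ⟨Or.inr rfl, hTstar _ (hmemS i hi _ (Or.inr rfl))
              (Or.inl (hnotC _ hrC h1))⟩
          · rw [hgdef i, if_neg h0, if_neg h1]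
            exact ⟨Or.inl rfl, hTstar _ (hmemS i hi _ (Or.inl rfl)) (Or.inr h0)⟩
      · constructor
        · intro h'; exact absurd hrC h'
        · intro hall
          exfalso
          have hj : (j₀ : ℕ) = 0 ∨ (j₀ : ℕ) = 1 := by omega
          have key : r ++ [n] ∉ C := hnotC n hrC heM
          have hi := hall i₀ hi₀
          rw [hgdef i₀] at hi
          rcases hj with hj | hj
          · rw [show 2 * i₀ = n by omega] at hi
            rw [if_pos heM] at hi
            exact key hi
          · have h0 : s(r, r ++ [2 * i₀]) ∉ M := by
              intro h0
              have h2 := hUniq _ h0 _ heM (Sym2.mem_mk_left _ _) (Sym2.mem_mk_left _ _)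
              have h3 := Sym2.congr_right.mp h2
              have h4 := List.append_cancel_left h3
              simp only [List.cons.injEq] at h4
              omega
            rw [if_neg h0, show 2 * i₀ + 1 = n by omega, if_pos heM] at hi
            exact key hi
    · -- impossible: r = t ++ [n]
      exfalso
      obtain ⟨n, hn⟩ := hn
      rcases htS with hl | ⟨i, hi, j, σ, hσ, hl⟩
      · rw [Set.mem_singleton_iff] at hl
        subst hl; exact hne n hn
      · have := congrArg List.length hn
        have := congrArg List.length hl
        simp at *; omega
  · -- r ∉ C : every little root is in C
    have hjC : ∀ i ∈ X, ∀ m : ℕ, m = 2 * i ∨ m = 2 * i + 1 → r ++ [m] ∈ C := by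
      intro i hi m hm
      have hedge : s(r, r ++ [m]) ∈ (treeGraph S).edgeSet := hadj i hi m hm
      obtain ⟨v, hv, hvC⟩ := hC_cover _ hedge
      rcases Sym2.mem_iff.mp hv with rfl | rfl
      · exact absurd hvC hrC
      · exact hvC
    obtain ⟨g, hgdef⟩ : ∃ g : ℕ → List ℕ, ∀ i,
        g i = if s(r, r ++ [2 * i]) ∈ M then r ++ [2 * i + 1] else r ++ [2 * i] :=
      ⟨_, fun _ => rfl⟩
    refine ⟨g, ?_, ?_⟩
    · intro i hi
      by_cases h0 : s(r, r ++ [2 * i]) ∈ M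
      · rw [hgdef i, if_pos h0]
        have h1 : s(r, r ++ [2 * i + 1]) ∉ M := by
          intro h1
          have h2 := hUniq _ h0 _ h1 (Sym2.mem_mk_left _ _) (Sym2.mem_mk_left _ _)
          have h3 := Sym2.congr_right.mp h2
          have h4 := List.append_cancel_left h3
          simp at h4
        exact ⟨Or.inr rfl, hTstar _ (hmemS i hi _ (Or.inr rfl)) (Or.inr h1)⟩
      · rw [hgdef i, if_neg h0]
        exact ⟨Or.inl rfl, hTstar _ (hmemS i hi _ (Or.inl rfl)) (Or.inr h0)⟩
    · refine ⟨fun _ i hi => ?_, fun _ => hrC⟩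
      by_cases h0 : s(r, r ++ [2 * i]) ∈ M
      · rw [hgdef i, if_pos h0]; exact hjC i hi _ (Or.inr rfl)
      · rw [hgdef i, if_neg h0]; exact hjC i hi _ (Or.inl rfl)
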